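/- For positive semidefinite K_x and matrices A, F, the matrix B* = A K_x Fᴴ (F K_x Fᴴ)† F minimizes tr((B−A) K_x (B−A)ᴴ) over all matrices B of the form B = G F, i.e., for every G, tr((GF − A) K_x (GF − A)ᴴ) ≥ tr((B* − A) K_x (B* − A)ᴴ). -/

import Mathlib

open Matrix
open scoped ComplexOrder

/-- The four Penrose conditions characterizing the Moore–Penrose pseudoinverse. -/
def IsMoorePenrose {m n : ℕ} (M : Matrix (Fin m) (Fin n) ℂ) (P : Matrix (Fin n) (Fin m) ℂ) : Prop :=
  M * P * M = M ∧ P * M * P = P ∧ (M * P)ᴴ = M * P ∧ (P * M)ᴴ = P * M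

/-- Key cancellation: if `P` satisfies (some of) the Penrose conditions for `M = C * Cᴴ`,
then `M * P * C = C`. -/
lemma penrose_CCt_cancel {q p : ℕ} (C : Matrix (Fin q) (Fin p) ℂ)
    (P : Matrix (Fin q) (Fin q) ℂ)
    (h1 : (C * Cᴴ) * P * (C * Cᴴ) = C * Cᴴ) :
    (C * Cᴴ) * P * C = C := by
  have key : (C * Cᴴ * P * C - C) * (C * Cᴴ * P * C - C)ᴴ = 0 := by
    have expand : (C * Cᴴ * P * C - C) * (C * Cᴴ * P * C - C)ᴴ
        = (C * Cᴴ * P * (C * Cᴴ)) * Pᴴ * (C * Cᴴ) - C * Cᴴ * P * (C * Cᴴ)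
          - (C * Cᴴ) * Pᴴ * (C * Cᴴ) + C * Cᴴ := by
      simp only [Matrix.conjTranspose_sub, Matrix.conjTranspose_mul,
        Matrix.conjTranspose_conjTranspose, Matrix.sub_mul, Matrix.mul_sub, Matrix.mul_assoc]
      abel
    rw [expand, h1]
    abel
  exact sub_eq_zero.mp (Matrix.self_mul_conjTranspose_eq_zero.mp key)

theorem optimal_linear_attack_matrix (N q p : ℕ)
    (A : Matrix (Fin N) (Fin p) ℂ) (F : Matrix (Fin q) (Fin p) ℂ)
    (Kx : Matrix (Fin p) (Fin p) ℂ) (hKx : Kx.PosSemidef)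
    (P : Matrix (Fin q) (Fin q) ℂ) (hP : IsMoorePenrose (F * Kx * Fᴴ) P) :
    ∀ G : Matrix (Fin N) (Fin q) ℂ,
      ((G * F - A) * Kx * (G * F - A)ᴴ).trace.re ≥
        ((A * Kx * Fᴴ * P * F - A) * Kx * (A * Kx * Fᴴ * P * F - A)ᴴ).trace.re := by
  intro G
  obtain ⟨hP1, hP2, hP3, hP4⟩ := hP
  have hKH : Kxᴴ = Kx := hKx.isHermitian
  obtain ⟨L, hLH, hLL⟩ : ∃ L : Matrix (Fin p) (Fin p) ℂ, Lᴴ = L ∧ L * L = Kx :=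
    open scoped MatrixOrder in
    ⟨CFC.sqrt Kx, (CFC.sqrt_nonneg Kx).posSemidef.isHermitian, CFC.sqrt_mul_sqrt_self Kx hKx.nonneg⟩
  have hMH : (F * Kx * Fᴴ)ᴴ = F * Kx * Fᴴ := by
    simp [Matrix.conjTranspose_mul, hKH, Matrix.mul_assoc]
  have hCC : (F * L) * (F * L)ᴴ = F * Kx * Fᴴ := by
    rw [Matrix.conjTranspose_mul, hLH, ← hLL]
    simp only [Matrix.mul_assoc]
  -- Pᴴ also satisfies the first Penrose condition for F * Kx * Fᴴ
  have h1' : ((F * L) * (F * L)ᴴ) * Pᴴ * ((F * L) * (F * L)ᴴ) = (F * L) * (F * L)ᴴ := by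
    rw [hCC]
    have := congrArg Matrix.conjTranspose hP1
    simpa [Matrix.conjTranspose_mul, hKH, Matrix.mul_assoc] using this
  have key' : ((F * L) * (F * L)ᴴ) * Pᴴ * (F * L) = F * L :=
    penrose_CCt_cancel (F * L) Pᴴ h1'
  -- the crucial identity
  have k2 : F * Kx * Fᴴ * Pᴴ * (F * Kx) = F * Kx := by
    have h := congrArg (· * L) key'
    simp only [hCC] at h
    have hCL : (F * L) * L = F * Kx := by rw [Matrix.mul_assoc, hLL]
    calc F * Kx * Fᴴ * Pᴴ * (F * Kx) = F * Kx * Fᴴ * Pᴴ * ((F * L) * L) := by rw [hCL]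
      _ = (F * Kx * Fᴴ * Pᴴ * (F * L)) * L := by simp only [Matrix.mul_assoc]
      _ = (F * L) * L := by rw [h]
      _ = F * Kx := hCL
  have k2' : F * (Kx * Fᴴ * Pᴴ * (F * Kx)) = F * Kx := by
    simpa [Matrix.mul_assoc] using k2
  set B := A * Kx * Fᴴ * P * F with hBdef
  -- cross term vanishes
  have hBH : Kx * (B - A)ᴴ = Kx * Fᴴ * Pᴴ * (F * Kx) * Aᴴ - Kx * Aᴴ := by
    rw [hBdef]
    simp only [Matrix.conjTranspose_sub, Matrix.mul_sub, Matrix.conjTranspose_mul, hKH,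
      Matrix.conjTranspose_conjTranspose]
    simp only [Matrix.mul_assoc]
  have cross : (G * F - B) * (Kx * (B - A)ᴴ) = 0 := by
    rw [hBH]
    have e1 : (G * F) * (Kx * Fᴴ * Pᴴ * (F * Kx) * Aᴴ) = (G * F) * (Kx * Aᴴ) := by
      calc (G * F) * (Kx * Fᴴ * Pᴴ * (F * Kx) * Aᴴ)
          = G * (F * (Kx * Fᴴ * Pᴴ * (F * Kx))) * Aᴴ := by
            simp only [Matrix.mul_assoc]
          _ = G * (F * Kx) * Aᴴ := by rw [k2']
          _ = (G * F) * (Kx * Aᴴ) := by simp only [Matrix.mul_assoc]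
    have e2 : B * (Kx * Fᴴ * Pᴴ * (F * Kx) * Aᴴ) = B * (Kx * Aᴴ) := by
      calc B * (Kx * Fᴴ * Pᴴ * (F * Kx) * Aᴴ)
          = A * (Kx * (Fᴴ * (P * (F * (Kx * Fᴴ * Pᴴ * (F * Kx)))))) * Aᴴ := by
            rw [hBdef]; simp only [Matrix.mul_assoc]
          _ = A * (Kx * (Fᴴ * (P * (F * Kx)))) * Aᴴ := by rw [k2']
          _ = B * (Kx * Aᴴ) := by rw [hBdef]; simp only [Matrix.mul_assoc]
    simp only [Matrix.sub_mul, Matrix.mul_sub, e1, e2]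
    abel
  have cross' : (G * F - B) * Kx * (B - A)ᴴ = 0 := by
    rw [Matrix.mul_assoc]; exact cross
  have crossT : (B - A) * Kx * (G * F - B)ᴴ = 0 := by
    have := congrArg Matrix.conjTranspose cross'
    simpa [Matrix.conjTranspose_mul, hKH, Matrix.mul_assoc] using this
  -- decomposition
  have decomp : (G * F - A) * Kx * (G * F - A)ᴴ
      = (G * F - B) * Kx * (G * F - B)ᴴ + (B - A) * Kx * (B - A)ᴴ := by
    have hsplit : G * F - A = (G * F - B) + (B - A) := by abel
    rw [hsplit, Matrix.conjTranspose_add]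
    rw [show ((G * F - B) + (B - A)) * Kx * ((G * F - B)ᴴ + (B - A)ᴴ)
        = (G * F - B) * Kx * (G * F - B)ᴴ + (G * F - B) * Kx * (B - A)ᴴ
          + ((B - A) * Kx * (G * F - B)ᴴ + (B - A) * Kx * (B - A)ᴴ) by
      simp only [Matrix.add_mul, Matrix.mul_add]; abel]
    rw [cross', crossT]
    abel
  -- positivity of the first term
  have hPSD : ((G * F - B) * Kx * (G * F - B)ᴴ).PosSemidef :=
    hKx.mul_mul_conjTranspose_same (G * F - B)
  have htr : 0 ≤ ((G * F - B) * Kx * (G * F - B)ᴴ).trace.re := by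
    have hdiag : ∀ i, 0 ≤ (((G * F - B) * Kx * (G * F - B)ᴴ) i i).re := by
      intro i
      have h := hPSD.dotProduct_mulVec_nonneg (Pi.single i 1)
      have he : star (Pi.single i 1 : Fin N → ℂ) ⬝ᵥ
          (((G * F - B) * Kx * (G * F - B)ᴴ)).mulVec (Pi.single i 1)
          = ((G * F - B) * Kx * (G * F - B)ᴴ) i i := by
        simp [Matrix.mulVec_single, dotProduct, Pi.single_apply, apply_ite]
      rw [he] at h
      exact (Complex.le_def.mp h).1
    rw [Matrix.trace]
    simp only [Matrix.diag_apply, Complex.re_sum]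
    exact Finset.sum_nonneg fun i _ => hdiag i
  rw [decomp, Matrix.trace_add, Complex.add_re, hBdef]
  linarith
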